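/- For each fixed integer m ≥ 1, δ(m,n) → 0 as n → ∞; consequently π − arccos(δ(m,n)) → π/2 as n → ∞. -/

import Mathlib

open Metric RealInnerProductSpace

/-- `BorsukSet m n` is the set of real numbers `δ ∈ (0, 1]` with the property that for
every continuous odd map `f : S^{n-1} → ℝ^{m+n-1}` there is a finite subset `X` of the
sphere `S^{n-1}` of cardinality at most `m+n` and geodesic diameter at most
`π - arccos δ` such that `0` lies in the convex hull of `f(X)`.  The number `δ(m,n)` of
the paper is the least element of this set. -/
def BorsukSet (m n : ℕ) : Set ℝ :=
  {δ : ℝ | δ ∈ Set.Ioc (0 : ℝ) 1 ∧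
    ∀ f : EuclideanSpace ℝ (Fin n) → EuclideanSpace ℝ (Fin (m + n - 1)),
      ContinuousOn f (sphere 0 1) →
      (∀ v ∈ sphere (0 : EuclideanSpace ℝ (Fin n)) 1, f (-v) = -f v) →
      ∃ X : Finset (EuclideanSpace ℝ (Fin n)),
        ↑X ⊆ sphere (0 : EuclideanSpace ℝ (Fin n)) 1 ∧
        X.card ≤ m + n ∧
        (∀ x ∈ X, ∀ y ∈ X, Real.arccos ⟪x, y⟫ ≤ Real.pi - Real.arccos δ) ∧
        (0 : EuclideanSpace ℝ (Fin (m + n - 1))) ∈ convexHull ℝ (f '' ↑X)}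

section Helpers

open Finset

variable {n k : ℕ}

local notation "H" => EuclideanSpace ℝ (Fin n)
local notation "F" => EuclideanSpace ℝ (Fin k)

theorem inner_expand {ι : Type*} [Fintype ι] [DecidableEq ι] (q : ι → H)
    (ho : ∀ i j, ⟪q i, q j⟫ = if i = j then (1:ℝ) else 0) (c d : ι → ℝ) :
    ⟪∑ i, c i • q i, ∑ i, d i • q i⟫ = ∑ i, c i * d i := by
  rw [inner_sum]
  refine Finset.sum_congr rfl fun j _ => ?_
  rw [real_inner_smul_right, sum_inner]
  have : ∀ i, i ∈ Finset.univ → ⟪c i • q i, q j⟫ = if i = j then c i else 0 := by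
    intro i _
    rw [real_inner_smul_left, ho]
    split <;> ring
  rw [Finset.sum_congr rfl this, Finset.sum_ite_eq' Finset.univ j c]
  simp [mul_comm]

theorem inner_expand_single {ι : Type*} [Fintype ι] [DecidableEq ι] (q : ι → H)
    (ho : ∀ i j, ⟪q i, q j⟫ = if i = j then (1:ℝ) else 0) (d : ι → ℝ) (i : ι) :
    ⟪q i, ∑ l, d l • q l⟫ = d i := by
  rw [inner_sum]
  have : ∀ l, l ∈ Finset.univ → ⟪q i, d l • q l⟫ = if l = i then d l else 0 := by
    intro l _
    rw [real_inner_smul_right, ho]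
    rcases eq_or_ne l i with h | h
    · subst h; simp
    · simp [h, Ne.symm h]
  rw [Finset.sum_congr rfl this, Finset.sum_ite_eq' Finset.univ i d]
  simp

theorem norm_one_of_inner_self (v : H) (hv : ⟪v, v⟫ = (1:ℝ)) : ‖v‖ = 1 := by
  have := real_inner_self_eq_norm_sq v
  nlinarith [norm_nonneg v]

theorem norm_combo {u w : H} (hu : ‖u‖ = 1) (hw : ‖w‖ = 1) (huw : ⟪u, w⟫ = 0)
    {a b : ℝ} (hab : a ^ 2 + b ^ 2 = 1) : ‖a • u + b • w‖ = 1 := by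
  have h1 : ‖a • u + b • w‖ ^ 2 = 1 := by
    rw [norm_add_sq_real]
    rw [norm_smul, norm_smul, real_inner_smul_left, real_inner_smul_right, huw]
    simp [hu, hw, mul_pow, abs_mul_abs_self]
    nlinarith [hab]
  nlinarith [norm_nonneg (a • u + b • w)]

/-- IVT on a great circle: an odd map composed with inner product against `y`
vanishes somewhere on any great circle. -/
theorem circle_ivt {f : H → F} (hf : ContinuousOn f (sphere 0 1))
    (hodd : ∀ v ∈ sphere (0 : H) 1, f (-v) = -f v)
    {u w : H} (hu : ‖u‖ = 1) (hw : ‖w‖ = 1) (huw : ⟪u, w⟫ = 0) (y : F) :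
    ∃ a b : ℝ, a ^ 2 + b ^ 2 = 1 ∧ ⟪f (a • u + b • w), y⟫ = 0 := by
  set c : ℝ → H := fun θ => Real.cos θ • u + Real.sin θ • w with hc
  have hcs : ∀ θ, c θ ∈ sphere (0 : H) 1 := by
    intro θ
    rw [mem_sphere_zero_iff_norm]
    exact norm_combo hu hw huw (by rw [Real.cos_sq_add_sin_sq])
  set g : ℝ → ℝ := fun θ => ⟪f (c θ), y⟫ with hg
  have hgc : Continuous g := by
    have h1 : Continuous c := by fun_prop
    have h2 : Continuous (f ∘ c) := hf.comp_continuous h1 hcs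
    exact (Continuous.inner h2 continuous_const)
  have hgpi : g Real.pi = -g 0 := by
    have h0 : c Real.pi = -(c 0) := by
      simp [hc, Real.cos_pi, Real.sin_pi]
    rw [hg]
    simp only [h0, hodd (c 0) (hcs 0)]
    simp [inner_neg_left]
  have : ∃ θ ∈ Set.Icc 0 Real.pi, g θ = 0 := by
    rcases le_total (g 0) 0 with h | h
    · have : (0:ℝ) ∈ Set.Icc (g 0) (g Real.pi) := ⟨h, by rw [hgpi]; linarith⟩
      obtain ⟨θ, hθ, hθ0⟩ := intermediate_value_Icc Real.pi_pos.le hgc.continuousOn this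
      exact ⟨θ, hθ, hθ0⟩
    · have : (0:ℝ) ∈ Set.Icc (g Real.pi) (g 0) := ⟨by rw [hgpi]; linarith, h⟩
      obtain ⟨θ, hθ, hθ0⟩ := intermediate_value_Icc' Real.pi_pos.le hgc.continuousOn this
      exact ⟨θ, hθ, hθ0⟩
  obtain ⟨θ, _, hθ0⟩ := this
  exact ⟨Real.cos θ, Real.sin θ, by rw [Real.cos_sq_add_sin_sq], hθ0⟩

/-- There is a unit vector orthogonal to fewer than `n` given vectors. -/
theorem exists_unit_orthogonal {ι : Type*} [Fintype ι] (v : ι → H)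
    (hcard : Fintype.card ι < n) :
    ∃ u : H, ‖u‖ = 1 ∧ ∀ i, ⟪v i, u⟫ = 0 := by
  set K := Submodule.span ℝ (Set.range v) with hK
  have hfr : Module.finrank ℝ K ≤ Fintype.card ι := finrank_range_le_card v
  have hKne : K ≠ ⊤ := by
    intro h
    rw [h] at hfr
    have : Module.finrank ℝ (⊤ : Submodule ℝ H) = n := by
      rw [finrank_top]; simp
    omega
  have : Kᗮ ≠ ⊥ := by
    intro h
    exact hKne (Submodule.orthogonal_eq_bot_iff.mp h)
  obtain ⟨x, hx, hx0⟩ := Submodule.ne_bot_iff _ |>.mp this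
  refine ⟨‖x‖⁻¹ • x, ?_, ?_⟩
  · rw [norm_smul]
    simp [norm_ne_zero_iff.mpr hx0]
  · intro i
    rw [real_inner_smul_right]
    have : ⟪v i, x⟫ = 0 := by
      have hvi : v i ∈ K := Submodule.subset_span ⟨i, rfl⟩
      exact (Submodule.mem_orthogonal K x |>.mp hx) (v i) hvi
    rw [this, mul_zero]

/-- A family of `T` orthonormal vectors whose `f`-values are orthogonal to `y`. -/
theorem exists_good_family {f : H → F} (hf : ContinuousOn f (sphere 0 1))
    (hodd : ∀ v ∈ sphere (0 : H) 1, f (-v) = -f v) (y : F) :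
    ∀ T : ℕ, T + 2 ≤ n → ∃ q : Fin T → H,
      (∀ i j, ⟪q i, q j⟫ = if i = j then (1:ℝ) else 0) ∧
      (∀ i, ⟪f (q i), y⟫ = 0) := by
  intro T
  induction T with
  | zero => exact fun _ => ⟨fun i => i.elim0, fun i => i.elim0, fun i => i.elim0⟩
  | succ T ih =>
    intro hT
    obtain ⟨q, ho, hqy⟩ := ih (by omega)
    -- u orthogonal to all q i
    obtain ⟨u, hu, hqu⟩ := exists_unit_orthogonal q (by simp; omega)
    -- w orthogonal to all q i and u
    obtain ⟨w, hw, hqw'⟩ := exists_unit_orthogonal (Fin.snoc q u : Fin (T+1) → H)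
      (by simp; omega)
    have hqw : ∀ i, ⟪q i, w⟫ = 0 := fun i => by
      have := hqw' i.castSucc
      rwa [Fin.snoc_castSucc] at this
    have huw : ⟪u, w⟫ = 0 := by
      have := hqw' (Fin.last T)
      rwa [Fin.snoc_last] at this
    obtain ⟨a, b, hab, hfy⟩ := circle_ivt hf hodd hu hw huw y
    set x := a • u + b • w with hx
    have hxq : ∀ i, ⟪q i, x⟫ = 0 := by
      intro i
      rw [hx, inner_add_right, real_inner_smul_right, real_inner_smul_right,
        hqu i, hqw i]
      ring
    have hxx : ⟪x, x⟫ = (1:ℝ) := by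
      have hn := norm_combo hu hw huw hab
      have := real_inner_self_eq_norm_sq x
      rw [← hx] at hn
      rw [this, hn]; norm_num
    refine ⟨Fin.snoc q x, ?_, ?_⟩
    · intro i j
      refine Fin.lastCases ?_ (fun i' => ?_) i
      · refine Fin.lastCases ?_ (fun j' => ?_) j
        · rw [Fin.snoc_last, hxx]; simp
        · rw [Fin.snoc_last, Fin.snoc_castSucc]
          rw [real_inner_comm, hxq j']
          simp [(Fin.castSucc_lt_last j').ne']
        -- done for i = last
      · refine Fin.lastCases ?_ (fun j' => ?_) j
        · rw [Fin.snoc_last, Fin.snoc_castSucc, hxq i']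
          simp [(Fin.castSucc_lt_last i').ne]
        · rw [Fin.snoc_castSucc, Fin.snoc_castSucc, ho i' j']
          simp [Fin.castSucc_inj]
    · intro i
      refine Fin.lastCases ?_ (fun i' => ?_) i
      · rw [Fin.snoc_last]; exact hfy
      · rw [Fin.snoc_castSucc]; exact hqy i'


theorem block_sum_eq {T lo mid hi : ℕ} (h1 : lo ≤ mid) (h2 : mid ≤ hi) (h3 : hi ≤ T)
    (g : ℕ → ℝ) (glo ghi : ℝ)
    (hg0 : ∀ i, i < lo ∨ hi ≤ i → g i = 0)
    (hglo : ∀ i, lo ≤ i → i < mid → g i = glo)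
    (hghi : ∀ i, mid ≤ i → i < hi → g i = ghi) :
    ∑ i ∈ Finset.range T, g i = ((mid - lo : ℕ) : ℝ) * glo + ((hi - mid : ℕ) : ℝ) * ghi := by
  rw [Finset.range_eq_Ico]
  rw [← Finset.sum_subset (Finset.Ico_subset_Ico (Nat.zero_le lo) h3)
    (by intro x hx hnx; apply hg0; simp [Finset.mem_Ico] at *; omega)]
  rw [← Finset.sum_Ico_consecutive g h1 h2]
  have e1 : ∑ i ∈ Finset.Ico lo mid, g i = ((mid - lo : ℕ) : ℝ) * glo := by
    calc ∑ i ∈ Finset.Ico lo mid, g i = ∑ _i ∈ Finset.Ico lo mid, glo :=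
          Finset.sum_congr rfl (fun i hmem => by
            rw [Finset.mem_Ico] at hmem; exact hglo i hmem.1 hmem.2)
      _ = ((mid - lo : ℕ) : ℝ) * glo := by
          rw [Finset.sum_const, Nat.card_Ico, nsmul_eq_mul]
  have e2 : ∑ i ∈ Finset.Ico mid hi, g i = ((hi - mid : ℕ) : ℝ) * ghi := by
    calc ∑ i ∈ Finset.Ico mid hi, g i = ∑ _i ∈ Finset.Ico mid hi, ghi :=
          Finset.sum_congr rfl (fun i hmem => by
            rw [Finset.mem_Ico] at hmem; exact hghi i hmem.1 hmem.2)
      _ = ((hi - mid : ℕ) : ℝ) * ghi := by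
          rw [Finset.sum_const, Nat.card_Ico, nsmul_eq_mul]
  rw [e1, e2]

end Helpers

section Main

open Finset

theorem arccos_le_arccos' {x y : ℝ} (hxy : x ≤ y) : Real.arccos y ≤ Real.arccos x := by
  unfold Real.arccos
  have := Real.monotone_arcsin hxy
  linarith


set_option maxHeartbeats 2000000 in
theorem delta_mem (m n : ℕ) (hm : 1 ≤ m) (hn : 2*m+4 ≤ n) :
    Real.sqrt 2 / Real.sqrt ((2*((n-2)/(2*(m+1))) : ℕ) : ℝ) ∈ BorsukSet m n := by
  classical
  set c : ℕ := (n-2)/(2*(m+1)) with hcdef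
  set bs : ℕ := 2*c with hbsdef
  set T : ℕ := n-2 with hTdef
  have hc1 : 1 ≤ c := by
    rw [hcdef, Nat.le_div_iff_mul_le (by omega)]
    omega
  have hbs2 : 2 ≤ bs := by omega
  have hbsT : (m+1)*bs ≤ T := by
    have h : c * (2*(m+1)) ≤ n-2 := Nat.div_mul_le_self (n-2) (2*(m+1))
    calc (m+1)*bs = c*(2*(m+1)) := by rw [hbsdef]; ring
      _ ≤ n-2 := h
  set δ : ℝ := Real.sqrt 2 / Real.sqrt (bs : ℝ) with hδdef
  have hbspos : (0:ℝ) < (bs:ℝ) := by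
    have : (2:ℝ) ≤ (bs:ℝ) := by exact_mod_cast hbs2
    linarith
  have hsbspos : 0 < Real.sqrt (bs:ℝ) := Real.sqrt_pos.mpr hbspos
  have hδpos : 0 < δ := by
    rw [hδdef]
    exact div_pos (Real.sqrt_pos.mpr (by norm_num)) hsbspos
  have hδle1 : δ ≤ 1 := by
    rw [hδdef, div_le_one hsbspos]
    exact Real.sqrt_le_sqrt (by exact_mod_cast hbs2)
  constructor
  · exact ⟨hδpos, hδle1⟩
  intro f hf hodd
  have hk1 : 1 ≤ m + n - 1 := by omega
  -- the distinguished direction y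
  set y : EuclideanSpace ℝ (Fin (m+n-1)) :=
    EuclideanSpace.single (⟨0, by omega⟩ : Fin (m+n-1)) (1:ℝ) with hydef
  have hy0 : y ≠ 0 := by
    rw [hydef]
    intro h
    have := congrArg (fun v : EuclideanSpace ℝ (Fin (m+n-1)) => v (⟨0, by omega⟩ : Fin (m+n-1))) h
    simp [EuclideanSpace.single_apply] at this
  -- the orthonormal family
  obtain ⟨q, ho, hqy⟩ := exists_good_family hf hodd y T (by omega)
  -- block coefficient functions (over ℕ, composed with Fin.val)
  set β : ℝ := (Real.sqrt (bs:ℝ))⁻¹ with hβdef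
  have hβpos : 0 < β := inv_pos.mpr hsbspos
  have hβ2 : β * β = (bs:ℝ)⁻¹ := by
    rw [hβdef, ← mul_inv]
    rw [Real.mul_self_sqrt hbspos.le]
  set CU : Fin (m+1) → ℕ → ℝ :=
    fun j i => if j.val*bs ≤ i ∧ i < j.val*bs+bs then β else 0 with hCUdef
  set CW : Fin (m+1) → ℕ → ℝ :=
    fun j i => if j.val*bs ≤ i ∧ i < j.val*bs+bs then
      (if i < j.val*bs+c then β else -β) else 0 with hCWdef
  set cu : Fin (m+1) → Fin T → ℝ := fun j i => CU j i.val with hcudef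
  set cw : Fin (m+1) → Fin T → ℝ := fun j i => CW j i.val with hcwdef
  have hblockT : ∀ j : Fin (m+1), j.val*bs + bs ≤ T := by
    intro j
    have : (j.val+1)*bs ≤ (m+1)*bs := Nat.mul_le_mul_right bs (by omega)
    calc j.val*bs + bs = (j.val+1)*bs := by ring
      _ ≤ (m+1)*bs := this
      _ ≤ T := hbsT
  -- the three block sums
  have S1 : ∀ j, ∑ i : Fin T, cu j i * cu j i = 1 := by
    intro j
    rw [hcudef]
    rw [Fin.sum_univ_eq_sum_range (fun i => CU j i * CU j i) T]
    rw [block_sum_eq (Nat.le_add_right _ bs) (le_refl _) (hblockT j)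
      (fun i => CU j i * CU j i) (β*β) 0
      (by intro i hcase; simp only [hCUdef]; rw [if_neg (by omega)]; ring)
      (by intro i h1 h2; simp only [hCUdef]; rw [if_pos (by omega)])
      (by intro i h1 h2; omega)]
    have e : j.val*bs + bs - j.val*bs = bs := by omega
    rw [e, Nat.sub_self, hβ2]
    push_cast
    rw [mul_inv_cancel₀ (ne_of_gt hbspos)]
    ring
  have S2 : ∀ j, ∑ i : Fin T, cw j i * cw j i = 1 := by
    intro j
    rw [hcwdef]
    rw [Fin.sum_univ_eq_sum_range (fun i => CW j i * CW j i) T]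
    rw [block_sum_eq (Nat.le_add_right _ bs) (le_refl _) (hblockT j)
      (fun i => CW j i * CW j i) (β*β) 0
      (by intro i hcase; simp only [hCWdef]; rw [if_neg (by omega)]; ring)
      (by intro i h1 h2; simp only [hCWdef]; rw [if_pos (by omega)]
          split_ifs <;> ring)
      (by intro i h1 h2; omega)]
    have e : j.val*bs + bs - j.val*bs = bs := by omega
    rw [e, Nat.sub_self, hβ2]
    push_cast
    rw [mul_inv_cancel₀ (ne_of_gt hbspos)]
    ring
  have S3 : ∀ j, ∑ i : Fin T, cu j i * cw j i = 0 := by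
    intro j
    rw [hcudef, hcwdef]
    rw [Fin.sum_univ_eq_sum_range (fun i => CU j i * CW j i) T]
    rw [block_sum_eq (Nat.le_add_right _ c) (by omega : j.val*bs + c ≤ j.val*bs + bs)
      (hblockT j) (fun i => CU j i * CW j i) (β*β) (-(β*β))
      (by intro i hcase; simp only [hCUdef, hCWdef]
          rw [if_neg (by omega), if_neg (by omega)]; ring)
      (by intro i h1 h2; simp only [hCUdef, hCWdef]
          rw [if_pos (by omega), if_pos (by omega), if_pos (by omega)])
      (by intro i h1 h2; simp only [hCUdef, hCWdef]
          rw [if_pos (by omega), if_pos (by omega), if_neg (by omega)]; ring)]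
    have e1 : j.val*bs + c - j.val*bs = c := by omega
    have e2 : j.val*bs + bs - (j.val*bs + c) = c := by omega
    rw [e1, e2]
    ring
  -- the vectors u j, w j and the circle points x j
  set u : Fin (m+1) → EuclideanSpace ℝ (Fin n) := fun j => ∑ i, cu j i • q i with hudef
  set w : Fin (m+1) → EuclideanSpace ℝ (Fin n) := fun j => ∑ i, cw j i • q i with hwdef
  have huu : ∀ j, ‖u j‖ = 1 := by
    intro j
    apply norm_one_of_inner_self
    rw [hudef]
    simp only
    rw [inner_expand q ho (cu j) (cu j), S1 j]
  have hww : ∀ j, ‖w j‖ = 1 := by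
    intro j
    apply norm_one_of_inner_self
    rw [hwdef]
    simp only
    rw [inner_expand q ho (cw j) (cw j), S2 j]
  have huw : ∀ j, ⟪u j, w j⟫ = 0 := by
    intro j
    rw [hudef, hwdef]
    simp only
    rw [inner_expand q ho (cu j) (cw j), S3 j]
  have hex : ∀ j, ∃ a b : ℝ, a^2 + b^2 = 1 ∧ ⟪f (a • u j + b • w j), y⟫ = 0 :=
    fun j => circle_ivt hf hodd (huu j) (hww j) (huw j) y
  choose A B hAB hfY using hex
  set ce : Fin (m+1) → Fin T → ℝ := fun j i => A j * cu j i + B j * cw j i with hcedef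
  set x : Fin (m+1) → EuclideanSpace ℝ (Fin n) := fun j => A j • u j + B j • w j with hxdef
  have hxco : ∀ j, x j = ∑ i, ce j i • q i := by
    intro j
    rw [hxdef, hudef, hwdef]
    simp only
    rw [Finset.smul_sum, Finset.smul_sum, ← Finset.sum_add_distrib]
    exact Finset.sum_congr rfl (fun i _ => by
      rw [smul_smul, smul_smul, ← add_smul])
  have hxx : ∀ j, ‖x j‖ = 1 := by
    intro j
    apply norm_one_of_inner_self
    rw [hxco j, inner_expand q ho]
    have expand : ∀ i : Fin T, ce j i * ce j i =
        (A j*A j)*(cu j i*cu j i) + (2*(A j)*(B j))*(cu j i * cw j i)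
          + (B j*B j)*(cw j i*cw j i) := by
      intro i
      simp only [hcedef]
      ring
    rw [Finset.sum_congr rfl fun i _ => expand i]
    rw [Finset.sum_add_distrib, Finset.sum_add_distrib,
      ← Finset.mul_sum, ← Finset.mul_sum, ← Finset.mul_sum, S1 j, S2 j, S3 j]
    nlinarith [hAB j]
  have hδβ : δ = Real.sqrt 2 * β := by rw [hδdef, hβdef, div_eq_mul_inv]
  have hABle : ∀ j, |A j + B j| ≤ Real.sqrt 2 ∧ |A j - B j| ≤ Real.sqrt 2 := by
    intro j
    constructor
    · rw [← Real.sqrt_sq_eq_abs]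
      apply Real.sqrt_le_sqrt
      nlinarith [hAB j, sq_nonneg (A j - B j)]
    · rw [← Real.sqrt_sq_eq_abs]
      apply Real.sqrt_le_sqrt
      nlinarith [hAB j, sq_nonneg (A j + B j)]
  have hce_bound : ∀ j i, |ce j i| ≤ δ := by
    intro j i
    simp only [hcedef, hcudef, hcwdef, hCUdef, hCWdef]
    by_cases hin : j.val*bs ≤ i.val ∧ i.val < j.val*bs+bs
    · rw [if_pos hin, if_pos hin]
      by_cases hlow : i.val < j.val*bs+c
      · rw [if_pos hlow, hδβ]
        have : A j * β + B j * β = (A j + B j) * β := by ring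
        rw [this, abs_mul, abs_of_pos hβpos]
        exact mul_le_mul_of_nonneg_right (hABle j).1 hβpos.le
      · rw [if_neg hlow, hδβ]
        have : A j * β + B j * -β = (A j - B j) * β := by ring
        rw [this, abs_mul, abs_of_pos hβpos]
        exact mul_le_mul_of_nonneg_right (hABle j).2 hβpos.le
    · rw [if_neg hin, if_neg hin]
      simp [hδpos.le]
  have hce0 : ∀ j (i : Fin T), (i.val < j.val*bs ∨ j.val*bs+bs ≤ i.val) → ce j i = 0 := by
    intro j i hcase
    simp only [hcedef, hcudef, hcwdef, hCUdef, hCWdef]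
    rw [if_neg (by omega), if_neg (by omega)]
    ring
  have hcedisj : ∀ j j', j ≠ j' → ∀ i : Fin T, ce j i * ce j' i = 0 := by
    intro j j' hne i
    by_cases hin : j.val*bs ≤ i.val ∧ i.val < j.val*bs+bs
    · have hv : j.val ≠ j'.val := fun h => hne (Fin.ext h)
      have hout : i.val < j'.val*bs ∨ j'.val*bs+bs ≤ i.val := by
        rcases lt_or_gt_of_ne hv with h | h
        · have h1 : (j.val+1)*bs ≤ j'.val*bs := Nat.mul_le_mul_right bs (by omega)
          have e : (j.val+1)*bs = j.val*bs + bs := by ring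
          left
          omega
        · have h1 : (j'.val+1)*bs ≤ j.val*bs := Nat.mul_le_mul_right bs (by omega)
          have e : (j'.val+1)*bs = j'.val*bs + bs := by ring
          right
          omega
      rw [hce0 j' i hout, mul_zero]
    · rw [hce0 j i (by omega), zero_mul]
  -- the full family of points
  set P : (Fin T ⊕ Fin (m+1)) → EuclideanSpace ℝ (Fin n) := Sum.elim q x with hPdef
  have hPnorm : ∀ z, ‖P z‖ = 1 := by
    rintro (i | j)
    · simp only [hPdef, Sum.elim_inl]
      apply norm_one_of_inner_self
      rw [ho i i, if_pos rfl]
    · simp only [hPdef, Sum.elim_inr]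
      exact hxx j
  have hPsphere : ∀ z, P z ∈ sphere (0 : EuclideanSpace ℝ (Fin n)) 1 :=
    fun z => mem_sphere_zero_iff_norm.mpr (hPnorm z)
  have hPy : ∀ z, ⟪f (P z), y⟫ = 0 := by
    rintro (i | j)
    · exact hqy i
    · exact hfY j
  have hqx : ∀ (i : Fin T) j, ⟪q i, x j⟫ = ce j i := by
    intro i j
    rw [hxco j]
    exact inner_expand_single q ho (ce j) i
  have hPbound : ∀ z z', z ≠ z' → |⟪P z, P z'⟫| ≤ δ := by
    rintro (i | j) (i' | j') hne
    · simp only [hPdef, Sum.elim_inl]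
      rw [ho i i', if_neg (fun h => hne (by rw [h]))]
      simp [hδpos.le]
    · simp only [hPdef, Sum.elim_inl, Sum.elim_inr]
      rw [hqx i j']
      exact hce_bound j' i
    · simp only [hPdef, Sum.elim_inl, Sum.elim_inr]
      rw [real_inner_comm, hqx i' j]
      exact hce_bound j i'
    · simp only [hPdef, Sum.elim_inr]
      have hjj : j ≠ j' := fun h => hne (by rw [h])
      rw [hxco j, hxco j', inner_expand q ho]
      rw [Finset.sum_eq_zero (fun i _ => hcedisj j j' hjj i)]
      simp [hδpos.le]
  -- linear dependence of the f-values
  set V : (Fin T ⊕ Fin (m+1)) → EuclideanSpace ℝ (Fin (m+n-1)) := fun z => f (P z) with hVdef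
  set K : Submodule ℝ (EuclideanSpace ℝ (Fin (m+n-1))) := (ℝ ∙ y)ᗮ with hKdef
  have hVK : ∀ z, V z ∈ K :=
    fun z => Submodule.mem_orthogonal_singleton_iff_inner_left.mpr (hPy z)
  have hfinrankK : Module.finrank ℝ K = m+n-2 := by
    have h1 := Submodule.finrank_add_finrank_orthogonal (K := (ℝ ∙ y))
    rw [finrank_span_singleton hy0, finrank_euclideanSpace_fin, ← hKdef] at h1
    omega
  have hdep : ¬ LinearIndependent ℝ V := by
    intro hLI
    have hV' : LinearIndependent ℝ (fun z => (⟨V z, hVK z⟩ : K)) := by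
      apply LinearIndependent.of_comp K.subtype
      exact hLI
    have hcard := hV'.fintype_card_le_finrank
    rw [hfinrankK] at hcard
    rw [Fintype.card_sum, Fintype.card_fin, Fintype.card_fin] at hcard
    omega
  obtain ⟨g, hgsum, z₀, hgz₀⟩ := Fintype.not_linearIndependent_iff.mp hdep
  -- sign-adjusted points
  set P' : (Fin T ⊕ Fin (m+1)) → EuclideanSpace ℝ (Fin n) :=
    fun z => if g z < 0 then -(P z) else P z with hP'def
  have hP'norm : ∀ z, ‖P' z‖ = 1 := by
    intro z
    rw [hP'def]
    simp only
    split_ifs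
    · rw [norm_neg]; exact hPnorm z
    · exact hPnorm z
  have hP'sphere : ∀ z, P' z ∈ sphere (0 : EuclideanSpace ℝ (Fin n)) 1 :=
    fun z => mem_sphere_zero_iff_norm.mpr (hP'norm z)
  have hfP' : ∀ z, |g z| • f (P' z) = g z • V z := by
    intro z
    rw [hP'def, hVdef]
    simp only
    split_ifs with h
    · rw [hodd (P z) (hPsphere z), abs_of_neg h]
      rw [smul_neg, neg_smul, neg_neg]
    · rw [abs_of_nonneg (not_lt.mp h)]
  have habs' : ∀ z z', z ≠ z' → |⟪P' z, P' z'⟫| ≤ δ := by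
    intro z z' hne
    rw [hP'def]
    simp only
    split_ifs <;>
      first
        | exact hPbound z z' hne
        | simpa [inner_neg_left, inner_neg_right, neg_neg, abs_neg] using hPbound z z' hne
  set S : Finset (Fin T ⊕ Fin (m+1)) := Finset.univ.filter (fun z => g z ≠ 0) with hSdef
  set X : Finset (EuclideanSpace ℝ (Fin n)) := S.image P' with hXdef
  have hmemX : ∀ z ∈ S, P' z ∈ X := by
    intro z hz
    rw [hXdef]
    exact Finset.mem_image_of_mem P' hz
  refine ⟨X, ?_, ?_, ?_, ?_⟩
  · -- X is a subset of the sphere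
    intro v hv
    rw [hXdef] at hv
    simp only [Finset.coe_image, Set.mem_image, Finset.mem_coe] at hv
    obtain ⟨z, _, rfl⟩ := hv
    exact hP'sphere z
  · -- cardinality
    calc X.card ≤ S.card := Finset.card_image_le
      _ ≤ Fintype.card (Fin T ⊕ Fin (m+1)) := by
          rw [← Finset.card_univ]
          exact Finset.card_filter_le _ _
      _ = T + (m+1) := by rw [Fintype.card_sum, Fintype.card_fin, Fintype.card_fin]
      _ ≤ m + n := by omega
  · -- diameter
    intro v hv v' hv'
    rw [hXdef] at hv hv'
    rw [Finset.mem_image] at hv hv'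
    obtain ⟨z, _, rfl⟩ := hv
    obtain ⟨z', _, rfl⟩ := hv'
    by_cases hzz : z = z'
    · subst hzz
      have h1 : ⟪P' z, P' z⟫ = (1:ℝ) := by
        rw [real_inner_self_eq_norm_sq, hP'norm z]
        norm_num
      rw [h1, Real.arccos_one]
      have := Real.arccos_le_pi δ
      linarith
    · have hb := habs' z z' hzz
      have hge : -δ ≤ ⟪P' z, P' z'⟫ := neg_le_of_abs_le hb
      calc Real.arccos ⟪P' z, P' z'⟫ ≤ Real.arccos (-δ) := arccos_le_arccos' hge
        _ = Real.pi - Real.arccos δ := Real.arccos_neg δ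
  · -- convex hull
    have hwpos : 0 < ∑ z ∈ S, |g z| := by
      apply Finset.sum_pos' (fun z _ => abs_nonneg (g z))
      refine ⟨z₀, ?_, abs_pos.mpr hgz₀⟩
      rw [hSdef]
      simp [hgz₀]
    have hsum0 : ∑ z ∈ S, |g z| • f (P' z) = 0 := by
      rw [Finset.sum_congr rfl (fun z _ => hfP' z)]
      rw [Finset.sum_subset (Finset.subset_univ S) (by
        intro z _ hz
        rw [hSdef] at hz
        simp only [Finset.mem_filter, Finset.mem_univ, true_and, not_not] at hz
        rw [hz, zero_smul])]
      exact hgsum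
    have hcm := Finset.centerMass_mem_convexHull S (fun z _ => abs_nonneg (g z)) hwpos
      (z := fun z => f (P' z))
      (fun z hz => Set.mem_image_of_mem f (by
        rw [Finset.mem_coe]
        exact hmemX z hz))
    have hzero : S.centerMass (fun z => |g z|) (fun z => f (P' z)) = 0 := by
      rw [Finset.centerMass, hsum0, smul_zero]
    rw [hzero] at hcm
    exact hcm

theorem sqrt_tendsto_atTop' : Filter.Tendsto Real.sqrt Filter.atTop Filter.atTop := by
  rw [Filter.tendsto_atTop_atTop]
  intro K
  refine ⟨max (K^2) 0, fun x hx => ?_⟩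
  calc K ≤ |K| := le_abs_self K
    _ = Real.sqrt (K^2) := (Real.sqrt_sq_eq_abs K).symm
    _ ≤ Real.sqrt x := Real.sqrt_le_sqrt (le_trans (le_max_left _ _) hx)

end Main

/-- Theorem 4.2(v) of the paper. Fix `m ≥ 1` and let `d n = δ(m, n)`
(the least element of `BorsukSet m n`).  Then `δ(m, n) → 0` as `n → ∞`, and hence
`π - arccos (δ(m, n)) → π/2`. -/
theorem stmt17 (m : ℕ) (hm : 1 ≤ m) (d : ℕ → ℝ)
    (hd : ∀ n, 1 < n → IsLeast (BorsukSet m n) (d n)) :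
    Filter.Tendsto d Filter.atTop (nhds 0) ∧
    Filter.Tendsto (fun n => Real.pi - Real.arccos (d n)) Filter.atTop
      (nhds (Real.pi / 2)) := by
  have hδ0 : Filter.Tendsto
      (fun n : ℕ => Real.sqrt 2 / Real.sqrt ((2*((n-2)/(2*(m+1))) : ℕ) : ℝ))
      Filter.atTop (nhds 0) := by
    apply Filter.Tendsto.div_atTop tendsto_const_nhds
    apply sqrt_tendsto_atTop'.comp
    apply tendsto_natCast_atTop_atTop.comp
    rw [Filter.tendsto_atTop_atTop]
    intro K
    refine ⟨2*(m+1)*K + 2, fun n hn => ?_⟩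
    have hK : K ≤ (n-2)/(2*(m+1)) := by
      rw [Nat.le_div_iff_mul_le (by omega)]
      have e : K * (2*(m+1)) = 2*(m+1)*K := by ring
      omega
    omega
  have h1 : Filter.Tendsto d Filter.atTop (nhds 0) := by
    apply tendsto_of_tendsto_of_tendsto_of_le_of_le' tendsto_const_nhds hδ0
    · filter_upwards [Filter.eventually_ge_atTop 2] with n hn
      exact (hd n (by omega)).1.1.1.le
    · filter_upwards [Filter.eventually_ge_atTop (2*m+4)] with n hn
      exact (hd n (by omega)).2 (delta_mem m n hm hn)
  refine ⟨h1, ?_⟩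
  have harc : Filter.Tendsto (fun n => Real.arccos (d n)) Filter.atTop
      (nhds (Real.arccos 0)) := (Real.continuous_arccos.tendsto 0).comp h1
  rw [Real.arccos_zero] at harc
  have hfin := (tendsto_const_nhds (x := Real.pi) (f := Filter.atTop (α := ℕ))).sub harc
  have : Real.pi - Real.pi/2 = Real.pi/2 := by ring
  rw [this] at hfin
  exact hfin
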